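/- Let P be a stochastic matrix on a finite state space Ω reversible with respect to μ, and let {P_{A_i}} be stochastic matrices reversible w.r.t. μ, each monotone, with P ≤ P_{A_i} for all i (meaning ⟨Pf, g⟩_μ ≤ ⟨P_{A_i}f, g⟩_μ for all increasing positive f, g). If P is monotone, then for all t ≥ 1 and all increasing positive functions f, g: ⟨f, Pᵗ g⟩_μ ≤ ⟨f, P_{A₁}P_{A₂}⋯P_{A_t} g⟩_μ. -/

import Mathlib

open Finset

section
variable {Ω : Type*} [Fintype Ω] [DecidableEq Ω] [PartialOrder Ω]

lemma adj_eq (μ : Ω → ℝ) (M : Matrix Ω Ω ℝ)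
    (hrev : ∀ σ τ, μ σ * M σ τ = μ τ * M τ σ) (f h : Ω → ℝ) :
    ∑ σ, μ σ * f σ * M.mulVec h σ = ∑ σ, μ σ * M.mulVec f σ * h σ := by
  simp only [Matrix.mulVec, dotProduct, Finset.mul_sum, Finset.sum_mul]
  rw [Finset.sum_comm]
  refine Finset.sum_congr rfl fun τ _ => Finset.sum_congr rfl fun σ _ => ?_
  linear_combination f σ * h τ * hrev σ τ

lemma mulVec_pos (M : Matrix Ω Ω ℝ) (hnn : ∀ σ τ, 0 ≤ M σ τ)
    (hrow : ∀ σ, ∑ τ, M σ τ = 1) (f : Ω → ℝ) (hf : ∀ σ, 0 < f σ) :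
    ∀ σ, 0 < M.mulVec f σ := by
  intro σ
  obtain ⟨τ0, -, hτ0⟩ : ∃ τ ∈ Finset.univ, 0 < M σ τ := by
    by_contra h; push_neg at h
    have h0 : (∑ τ, M σ τ) = 0 :=
      Finset.sum_eq_zero fun τ hτ => le_antisymm (h τ hτ) (hnn σ τ)
    rw [hrow σ] at h0; norm_num at h0
  have hle : M σ τ0 * f τ0 ≤ ∑ τ, M σ τ * f τ :=
    Finset.single_le_sum (fun τ _ => mul_nonneg (hnn σ τ) (hf τ).le) (mem_univ τ0)
  have : (0:ℝ) < M σ τ0 * f τ0 := mul_pos hτ0 (hf τ0)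
  calc (0:ℝ) < M σ τ0 * f τ0 := this
  _ ≤ M.mulVec f σ := hle

lemma list_adj (μ : Ω → ℝ)
    (L : List (Matrix Ω Ω ℝ))
    (hnn : ∀ M ∈ L, ∀ σ τ, 0 ≤ M σ τ) (hrow : ∀ M ∈ L, ∀ σ, ∑ τ, M σ τ = 1)
    (hrev : ∀ M ∈ L, ∀ σ τ, μ σ * M σ τ = μ τ * M τ σ)
    (hmono : ∀ M ∈ L, ∀ f : Ω → ℝ, Monotone f → Monotone (M.mulVec f))
    (f : Ω → ℝ) (hf : Monotone f) (hfpos : ∀ σ, 0 < f σ) :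
    ∃ F : Ω → ℝ, Monotone F ∧ (∀ σ, 0 < F σ) ∧
      ∀ h : Ω → ℝ, ∑ σ, μ σ * f σ * (L.prod).mulVec h σ = ∑ σ, μ σ * F σ * h σ := by
  induction L generalizing f with
  | nil => exact ⟨f, hf, hfpos, fun h => by simp [Matrix.mulVec_one]⟩
  | cons M L ih =>
    have hM : M ∈ M :: L := List.mem_cons_self
    obtain ⟨F, hF, hFpos, hFeq⟩ :=
      ih (fun N hN => hnn N (List.mem_cons_of_mem _ hN))
        (fun N hN => hrow N (List.mem_cons_of_mem _ hN))
        (fun N hN => hrev N (List.mem_cons_of_mem _ hN))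
        (fun N hN => hmono N (List.mem_cons_of_mem _ hN))
        (M.mulVec f) (hmono M hM f hf)
        (mulVec_pos M (hnn M hM) (hrow M hM) f hfpos)
    refine ⟨F, hF, hFpos, fun h => ?_⟩
    have e : (M :: L).prod.mulVec h = M.mulVec ((L.prod).mulVec h) := by
      rw [List.prod_cons, ← Matrix.mulVec_mulVec]
    rw [e, adj_eq μ M (hrev M hM) f (L.prod.mulVec h)]
    exact hFeq h

end

theorem stmt_3 {Ω : Type*} [Fintype Ω] [DecidableEq Ω] [PartialOrder Ω]
    (μ : Ω → ℝ) (hμpos : ∀ σ, 0 < μ σ) (hμsum : ∑ σ, μ σ = 1)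
    (P : Matrix Ω Ω ℝ) (Pa : ℕ → Matrix Ω Ω ℝ)
    (hPnonneg : ∀ σ τ, 0 ≤ P σ τ) (hProw : ∀ σ, ∑ τ, P σ τ = 1)
    (hPanonneg : ∀ i σ τ, 0 ≤ Pa i σ τ) (hParow : ∀ i σ, ∑ τ, Pa i σ τ = 1)
    (hPrev : ∀ σ τ, μ σ * P σ τ = μ τ * P τ σ)
    (hParev : ∀ i σ τ, μ σ * Pa i σ τ = μ τ * Pa i τ σ)
    (hPmono : ∀ f : Ω → ℝ, Monotone f → Monotone (P.mulVec f))
    (hPamono : ∀ i, ∀ f : Ω → ℝ, Monotone f → Monotone ((Pa i).mulVec f))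
    (hle : ∀ i, ∀ f g : Ω → ℝ, Monotone f → Monotone g →
      (∀ σ, 0 < f σ) → (∀ σ, 0 < g σ) →
      ∑ σ, μ σ * P.mulVec f σ * g σ ≤ ∑ σ, μ σ * (Pa i).mulVec f σ * g σ)
    (t : ℕ) (ht : 1 ≤ t)
    (f g : Ω → ℝ) (hf : Monotone f) (hg : Monotone g)
    (hfpos : ∀ σ, 0 < f σ) (hgpos : ∀ σ, 0 < g σ) :
    ∑ σ, μ σ * f σ * (P ^ t).mulVec g σ ≤
      ∑ σ, μ σ * f σ * (((List.range t).map Pa).prod).mulVec g σ := by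
  induction t, ht using Nat.le_induction generalizing g with
  | base =>
    simp only [pow_one, List.range_succ, List.range_zero, List.nil_append,
      List.map_cons, List.map_nil, List.prod_cons, List.prod_nil, mul_one]
    have h1 := hle 0 g f hg hf hgpos hfpos
    calc ∑ σ, μ σ * f σ * P.mulVec g σ
        = ∑ σ, μ σ * P.mulVec g σ * f σ := by
          exact Finset.sum_congr rfl fun σ _ => by ring
      _ ≤ ∑ σ, μ σ * (Pa 0).mulVec g σ * f σ := h1
      _ = ∑ σ, μ σ * f σ * (Pa 0).mulVec g σ := by
          exact Finset.sum_congr rfl fun σ _ => by ring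
  | succ t ht ih =>
    set L := (List.range t).map Pa with hL
    obtain ⟨F, hF, hFpos, hFeq⟩ := list_adj μ L
      (by rintro M hM; rw [hL, List.mem_map] at hM; obtain ⟨i, -, rfl⟩ := hM; exact hPanonneg i)
      (by rintro M hM; rw [hL, List.mem_map] at hM; obtain ⟨i, -, rfl⟩ := hM; exact hParow i)
      (by rintro M hM; rw [hL, List.mem_map] at hM; obtain ⟨i, -, rfl⟩ := hM; exact hParev i)
      (by rintro M hM; rw [hL, List.mem_map] at hM; obtain ⟨i, -, rfl⟩ := hM; exact hPamono i)
      f hf hfpos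
    have ePt : (P ^ (t+1)).mulVec g = (P ^ t).mulVec (P.mulVec g) := by
      rw [Matrix.mulVec_mulVec, ← pow_succ]
    have eQ : ((List.range (t+1)).map Pa).prod.mulVec g
        = L.prod.mulVec ((Pa t).mulVec g) := by
      rw [List.range_succ, List.map_append, List.prod_append, List.map_singleton,
        List.prod_singleton, ← Matrix.mulVec_mulVec]
    rw [ePt, eQ]
    have hPg : Monotone (P.mulVec g) := hPmono g hg
    have hPgpos : ∀ σ, 0 < P.mulVec g σ := mulVec_pos P hPnonneg hProw g hgpos
    calc ∑ σ, μ σ * f σ * (P ^ t).mulVec (P.mulVec g) σ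
        ≤ ∑ σ, μ σ * f σ * L.prod.mulVec (P.mulVec g) σ := ih _ hPg hPgpos
      _ = ∑ σ, μ σ * F σ * (P.mulVec g) σ := hFeq _
      _ = ∑ σ, μ σ * P.mulVec g σ * F σ := Finset.sum_congr rfl fun σ _ => by ring
      _ ≤ ∑ σ, μ σ * (Pa t).mulVec g σ * F σ := hle t g F hg hF hgpos hFpos
      _ = ∑ σ, μ σ * F σ * ((Pa t).mulVec g) σ := Finset.sum_congr rfl fun σ _ => by ring
      _ = ∑ σ, μ σ * f σ * L.prod.mulVec ((Pa t).mulVec g) σ := (hFeq _).symm
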